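/- Let A_1, A_2 ⊆ F_q with 3 ≤ #A_1 = d_1 < d_2 = #A_2, and let 2 ≤ d < d_1. Then the second Hamming weight of the affine cartesian code C(d) over X = A_1 × A_2 equals (d_1 − d + 1)(d_2 − 1). -/

import Mathlib

open MvPolynomial

/-- The set of Hamming weights of nonzero codewords of `C(d)` over
`X = A_1 × ⋯ × A_n`. -/
def codeWeights (F : Type*) [Field F] (n : ℕ) (A : Fin n → Finset F)
    (d : ℕ) : Set ℕ :=
  {w | ∃ f : MvPolynomial (Fin n) F, f.totalDegree ≤ d ∧
    w = Set.ncard {x : Fin n → F | (∀ i, x i ∈ A i) ∧ eval x f ≠ 0} ∧ w ≠ 0}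

section Helpers

variable {F : Type*} [Field F]

/-- Restriction of a 2-variable polynomial to the line `x₀ = a`. -/
noncomputable def lineRes (a : F) : MvPolynomial (Fin 2) F →ₐ[F] Polynomial F :=
  aeval (fun i => if i = 0 then Polynomial.C a else Polynomial.X)

lemma eval_lineRes (a b : F) (f : MvPolynomial (Fin 2) F) :
    (lineRes a f).eval b = eval ![a, b] f := by
  have : (Polynomial.evalRingHom b).comp ((lineRes a : MvPolynomial (Fin 2) F →ₐ[F] Polynomial F) :
      MvPolynomial (Fin 2) F →+* Polynomial F) = (eval ![a, b] : MvPolynomial (Fin 2) F →+* F) := by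
    apply MvPolynomial.ringHom_ext
    · intro r; simp [lineRes]
    · intro i; fin_cases i <;> simp [lineRes]
  exact congrFun (congrArg (·.toFun) this) f

lemma natDegree_lineRes_le (a : F) (f : MvPolynomial (Fin 2) F) :
    (lineRes a f).natDegree ≤ f.totalDegree := by
  conv_lhs => rw [f.as_sum]
  rw [map_sum]
  apply Polynomial.natDegree_sum_le_of_forall_le
  intro m hm
  have h1 : (lineRes a) (monomial m (coeff m f)) =
      Polynomial.C (coeff m f) * (Polynomial.C a ^ m 0 * Polynomial.X ^ m 1) := by
    rw [lineRes, aeval_monomial, Finsupp.prod_fintype _ _ (fun i => pow_zero _),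
      Fin.prod_univ_two]
    simp [Polynomial.algebraMap_eq]
  rw [h1, ← Polynomial.C_pow, ← mul_assoc, ← Polynomial.C_mul]
  refine (Polynomial.natDegree_C_mul_le _ _).trans ?_
  rw [Polynomial.natDegree_X_pow]
  calc m 1 ≤ m 0 + m 1 := Nat.le_add_left _ _
    _ = m.sum fun _ e => e := by
        rw [Finsupp.sum_fintype _ _ (fun _ => rfl), Fin.sum_univ_two]
    _ ≤ f.totalDegree := le_totalDegree hm

/-- `MvPolynomial (Fin 1) F ≃ Polynomial F`. -/
noncomputable def chi : MvPolynomial (Fin 1) F ≃ₐ[F] Polynomial F :=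
  (renameEquiv F (Equiv.equivPUnit.{1,1} (Fin 1))).trans (pUnitAlgEquiv F)

lemma dvd_of_lineRes_eq_zero (a : F) (f : MvPolynomial (Fin 2) F)
    (h : lineRes a f = 0) : (X 0 - C a : MvPolynomial (Fin 2) F) ∣ f := by
  set e := finSuccEquiv F 1 with he
  have key : ((chi : MvPolynomial (Fin 1) F ≃ₐ[F] Polynomial F) : MvPolynomial (Fin 1) F →+* Polynomial F).comp
      ((Polynomial.evalRingHom (C a : MvPolynomial (Fin 1) F)).comp
        (e : MvPolynomial (Fin 2) F →+* Polynomial (MvPolynomial (Fin 1) F)))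
      = (lineRes a : MvPolynomial (Fin 2) F →+* Polynomial F) := by
    apply MvPolynomial.ringHom_ext
    · intro r
      simp [he, lineRes, chi, finSuccEquiv_apply]
    · intro i
      fin_cases i
      · simp [he, lineRes, chi, finSuccEquiv_X_zero]
      · show chi (Polynomial.eval _ (e (X 1))) = lineRes a (X 1)
        have h1 : (X 1 : MvPolynomial (Fin 2) F) = X (0 : Fin 1).succ := rfl
        rw [h1, he, finSuccEquiv_X_succ, Polynomial.eval_C]
        simp [chi, lineRes]
  have h0 : Polynomial.eval (C a : MvPolynomial (Fin 1) F) (e f) = 0 := by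
    apply chi.injective
    have := RingHom.congr_fun key f
    simpa [h] using this
  have hdvd : (Polynomial.X - Polynomial.C (C a : MvPolynomial (Fin 1) F)) ∣ e f :=
    (Polynomial.dvd_iff_isRoot).2 h0
  obtain ⟨q, hq⟩ := hdvd
  refine ⟨e.symm q, ?_⟩
  have : f = e.symm (e f) := (e.symm_apply_apply f).symm
  rw [this, hq, map_mul, map_sub]
  congr 2
  · exact (AlgEquiv.symm_apply_eq e).2 (finSuccEquiv_X_zero).symm
  · exact RingHom.congr_fun (finSuccEquiv_comp_C_eq_C (R := F) 1) a

lemma prod_dvd_of_lineRes_eq_zero (S : Finset F) (f : MvPolynomial (Fin 2) F)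
    (h : ∀ a ∈ S, lineRes a f = 0) : (∏ a ∈ S, (X 0 - C a : MvPolynomial (Fin 2) F)) ∣ f := by
  classical
  induction S using Finset.induction_on generalizing f with
  | empty => simpa using one_dvd f
  | @insert a S ha ih =>
    obtain ⟨q, hq⟩ := dvd_of_lineRes_eq_zero a f (h a (Finset.mem_insert_self a S))
    have hq' : ∀ a' ∈ S, lineRes a' q = 0 := by
      intro a' ha'
      have h0 := h a' (Finset.mem_insert_of_mem ha')
      rw [hq, map_mul] at h0
      have h1 : lineRes a' (X 0 - C a : MvPolynomial (Fin 2) F) =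
          Polynomial.C (a' - a) := by
        simp [lineRes]
      rw [h1] at h0
      have h2 : (Polynomial.C (a' - a) : Polynomial F) ≠ 0 := by
        simp only [ne_eq, Polynomial.C_eq_zero, sub_eq_zero]
        rintro rfl; exact ha ha'
      exact (mul_eq_zero.1 h0).resolve_left h2
    rw [Finset.prod_insert ha, hq]
    exact mul_dvd_mul_left _ (ih q hq')

lemma le_totalDegree_X_sub_C_mul {h : MvPolynomial (Fin 2) F} (hh : h ≠ 0) (a : F) :
    h.totalDegree + 1 ≤ ((X 0 - C a) * h).totalDegree := by
  obtain ⟨μ, hμ, hsum⟩ := Finset.exists_mem_eq_sup h.support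
    (MvPolynomial.support_nonempty.mpr hh) (fun m => m.sum fun _ e => e)
  have hsum' : h.totalDegree = μ.sum fun _ e => e := hsum
  set ν : Fin 2 →₀ ℕ := Finsupp.single 0 1 + μ with hν
  have hνsum : (ν.sum fun _ e => e) = (μ.sum fun _ e => e) + 1 := by
    rw [hν, Finsupp.sum_add_index' (fun _ => rfl) (fun _ _ _ => rfl),
      Finsupp.sum_single_index rfl]
    omega
  have hcoeff : coeff ν ((X 0 - C a) * h) = coeff μ h := by
    rw [sub_mul, coeff_sub, hν, coeff_X_mul]
    have : coeff (Finsupp.single 0 1 + μ) (C a * h) = 0 := by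
      rw [coeff_C_mul]
      have hz : coeff (Finsupp.single 0 1 + μ) h = 0 := by
        by_contra hc
        have := le_totalDegree (mem_support_iff.2 hc)
        rw [← hν] at this
        rw [hνsum] at this
        omega
      rw [hz, mul_zero]
    rw [this, sub_zero]
  have hne : coeff ν ((X 0 - C a) * h) ≠ 0 := by
    rw [hcoeff]; exact mem_support_iff.1 hμ
  have := le_totalDegree (mem_support_iff.2 hne)
  rw [hνsum] at this
  omega

lemma totalDegree_prod_X_sub_C_mul (S : Finset F) (h : MvPolynomial (Fin 2) F)
    (hne : (∏ a ∈ S, (X 0 - C a : MvPolynomial (Fin 2) F)) * h ≠ 0) :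
    ((∏ a ∈ S, (X 0 - C a : MvPolynomial (Fin 2) F)) * h).totalDegree
      = S.card + h.totalDegree := by
  classical
  induction S using Finset.induction_on generalizing h with
  | empty => simp
  | @insert a S ha ih =>
    rw [Finset.prod_insert ha, mul_assoc] at hne ⊢
    set g := (∏ a ∈ S, (X 0 - C a : MvPolynomial (Fin 2) F)) * h with hg
    have hgne : g ≠ 0 := right_ne_zero_of_mul hne
    have hup : ((X 0 - C a) * g).totalDegree ≤ 1 + g.totalDegree := by
      refine (totalDegree_mul _ _).trans (add_le_add_left ?_ _)
      refine (totalDegree_sub _ _).trans ?_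
      simp [totalDegree_X]
    have hlow := le_totalDegree_X_sub_C_mul hgne a
    have : ((X 0 - C a) * g).totalDegree = 1 + g.totalDegree := by omega
    rw [this, ih h hgne, Finset.card_insert_of_notMem ha]
    omega

open scoped Classical in
lemma ncard_weight (A : Fin 2 → Finset F) (f : MvPolynomial (Fin 2) F) :
    {x : Fin 2 → F | (∀ i, x i ∈ A i) ∧ eval x f ≠ 0}.ncard
      = ∑ a ∈ A 0, ((A 1).filter fun b => eval ![a, b] f ≠ 0).card := by
  classical
  have hinj : Function.Injective (fun p : F × F => ![p.1, p.2]) := by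
    intro p q h
    have h0 := congrFun h 0
    have h1 := congrFun h 1
    simp at h0 h1
    exact Prod.ext h0 h1
  have himg : {x : Fin 2 → F | (∀ i, x i ∈ A i) ∧ eval x f ≠ 0}
      = (fun p : F × F => ![p.1, p.2]) ''
        ↑(((A 0) ×ˢ (A 1)).filter fun p => eval ![p.1, p.2] f ≠ 0) := by
    ext x
    simp only [Set.mem_image, Finset.coe_filter, Set.mem_setOf_eq, Finset.mem_product]
    constructor
    · rintro ⟨hmem, hne⟩
      have hx : ![x 0, x 1] = x := by
        funext i; fin_cases i <;> rfl
      exact ⟨(x 0, x 1), ⟨⟨hmem 0, hmem 1⟩, by rw [hx]; exact hne⟩, hx⟩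
    · rintro ⟨p, ⟨⟨h1, h2⟩, hne⟩, rfl⟩
      refine ⟨fun i => ?_, hne⟩
      fin_cases i <;> simpa
  rw [himg, Set.ncard_image_of_injective _ hinj, Set.ncard_coe_finset,
    Finset.card_filter, Finset.sum_product]
  exact Finset.sum_congr rfl fun a _ => (Finset.card_filter _ _).symm

open scoped Classical in
lemma card_line_zeros_le (A₂ : Finset F) (p : Polynomial F) (hp : p ≠ 0) :
    (A₂.filter fun b => p.eval b = 0).card ≤ p.natDegree := by
  classical
  have hsub : (A₂.filter fun b => p.eval b = 0) ⊆ p.roots.toFinset := by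
    intro b hb
    rw [Finset.mem_filter] at hb
    rw [Multiset.mem_toFinset, Polynomial.mem_roots hp]
    exact hb.2
  exact (Finset.card_le_card hsub).trans
    ((Multiset.toFinset_card_le _).trans (Polynomial.card_roots' _))

open scoped Classical in
/-- Key structural lemma. -/
lemma key_bound (A : Fin 2 → Finset F) (d : ℕ) (f : MvPolynomial (Fin 2) F) (hf : f ≠ 0)
    (hdeg : f.totalDegree ≤ d) :
    ∃ t ≤ d,
      ((A 0).card - t) * ((A 1).card - (d - t)) ≤
        {x : Fin 2 → F | (∀ i, x i ∈ A i) ∧ eval x f ≠ 0}.ncard ∧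
      (t = d → {x : Fin 2 → F | (∀ i, x i ∈ A i) ∧ eval x f ≠ 0}.ncard
        = ((A 0).card - d) * (A 1).card) := by
  classical
  set S : Finset F := (A 0).filter (fun a => lineRes a f = 0) with hS
  obtain ⟨h, hfh⟩ := prod_dvd_of_lineRes_eq_zero S f (fun a ha => (Finset.mem_filter.1 ha).2)
  set t := S.card with htdef
  have hdeq : f.totalDegree = t + h.totalDegree := by
    rw [hfh]; exact totalDegree_prod_X_sub_C_mul S h (hfh ▸ hf)
  have ht : t ≤ d := by omega
  have hhdeg : h.totalDegree ≤ d - t := by omega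
  have hSsub : S ⊆ A 0 := Finset.filter_subset _ _
  -- per-line weights
  have hline : ∀ a ∈ A 0 \ S, ∃ z ≤ d - t,
      ((A 1).filter fun b => eval ![a, b] f ≠ 0).card = (A 1).card - z ∧
      z ≤ (A 1).card := by
    intro a ha
    rw [Finset.mem_sdiff] at ha
    have hfa : lineRes a f ≠ 0 := by
      intro h0
      exact ha.2 (Finset.mem_filter.2 ⟨ha.1, h0⟩)
    have hha : lineRes a h ≠ 0 := by
      intro h0
      apply hfa
      rw [hfh, map_mul, h0, mul_zero]
    -- zeros on the line are zeros of `lineRes a h`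
    refine ⟨((A 1).filter fun b => eval ![a, b] f = 0).card, ?_, ?_, ?_⟩
    · have hsub : ((A 1).filter fun b => eval ![a, b] f = 0) ⊆
          ((A 1).filter fun b => (lineRes a h).eval b = 0) := by
        intro b hb
        rw [Finset.mem_filter] at hb ⊢
        refine ⟨hb.1, ?_⟩
        have hev : (lineRes a f).eval b = 0 := by rw [eval_lineRes]; exact hb.2
        rw [hfh, map_mul, Polynomial.eval_mul] at hev
        have hg : (lineRes a (∏ a' ∈ S, (X 0 - C a' : MvPolynomial (Fin 2) F))).eval b ≠ 0 := by
          rw [map_prod, Polynomial.eval_prod]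
          apply Finset.prod_ne_zero_iff.2
          intro a' ha'
          have : lineRes a (X 0 - C a' : MvPolynomial (Fin 2) F) = Polynomial.C (a - a') := by
            simp [lineRes]
          rw [this, Polynomial.eval_C]
          rw [sub_ne_zero]
          rintro rfl
          exact ha.2 ha'
        exact (mul_eq_zero.1 hev).resolve_left hg
      calc ((A 1).filter fun b => eval ![a, b] f = 0).card
          ≤ ((A 1).filter fun b => (lineRes a h).eval b = 0).card := Finset.card_le_card hsub
        _ ≤ (lineRes a h).natDegree := card_line_zeros_le _ _ hha
        _ ≤ h.totalDegree := natDegree_lineRes_le _ _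
        _ ≤ d - t := hhdeg
    · have := Finset.card_filter_add_card_filter_not (s := A 1)
        (p := fun b => eval ![a, b] f ≠ 0)
      simp only [not_not] at this
      omega
    · exact (Finset.card_le_card (Finset.filter_subset _ _))
  have hSzero : ∀ a ∈ S, ((A 1).filter fun b => eval ![a, b] f ≠ 0).card = 0 := by
    intro a ha
    rw [Finset.card_eq_zero, Finset.filter_eq_empty_iff]
    intro b _
    rw [not_ne_iff, ← eval_lineRes, (Finset.mem_filter.1 ha).2, Polynomial.eval_zero]
  have hsplit : ∑ a ∈ A 0, ((A 1).filter fun b => eval ![a, b] f ≠ 0).card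
      = ∑ a ∈ A 0 \ S, ((A 1).filter fun b => eval ![a, b] f ≠ 0).card := by
    rw [← Finset.sum_sdiff hSsub, Finset.sum_congr rfl (fun a ha => hSzero a ha)]
    simp
  have hcardsdiff : (A 0 \ S).card = (A 0).card - t := Finset.card_sdiff_of_subset hSsub
  refine ⟨t, ht, ?_, ?_⟩
  · rw [ncard_weight, hsplit]
    calc ((A 0).card - t) * ((A 1).card - (d - t))
        = ∑ _a ∈ A 0 \ S, ((A 1).card - (d - t)) := by
          rw [Finset.sum_const, hcardsdiff, smul_eq_mul]
      _ ≤ ∑ a ∈ A 0 \ S, ((A 1).filter fun b => eval ![a, b] f ≠ 0).card := by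
          apply Finset.sum_le_sum
          intro a ha
          obtain ⟨z, hz, hzc, _⟩ := hline a ha
          omega
  · intro htd
    rw [ncard_weight, hsplit]
    have : ∀ a ∈ A 0 \ S, ((A 1).filter fun b => eval ![a, b] f ≠ 0).card = (A 1).card := by
      intro a ha
      obtain ⟨z, hz, hzc, _⟩ := hline a ha
      have : z = 0 := by omega
      omega
    rw [Finset.sum_congr rfl this, Finset.sum_const, hcardsdiff, htd, smul_eq_mul]

lemma arith1 (t d d₁ d₂ : ℕ) (h1 : t ≤ d) (h2 : d < d₁) (h3 : d₁ < d₂) :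
    (d₁ - d) * d₂ ≤ (d₁ - t) * (d₂ - (d - t)) := by
  have e1 : t ≤ d₁ := by omega
  have e2 : d - t ≤ d₂ := by omega
  have e3 : d ≤ d₁ := by omega
  zify [e1, e2, e3, h1]
  nlinarith [mul_nonneg (show (0:ℤ) ≤ (d:ℤ) - t by omega)
    (show (0:ℤ) ≤ (d₂:ℤ) - d₁ + t by omega)]

lemma arith2 (t d d₁ d₂ : ℕ) (h1 : t + 1 ≤ d) (h2 : d < d₁) (h3 : d₁ < d₂) :
    (d₁ - d + 1) * (d₂ - 1) ≤ (d₁ - t) * (d₂ - (d - t)) := by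
  have e1 : t ≤ d₁ := by omega
  have e2 : d - t ≤ d₂ := by omega
  have e3 : d ≤ d₁ := by omega
  have e4 : 1 ≤ d₂ := by omega
  have e5 : t ≤ d := by omega
  zify [e1, e2, e3, e4, e5]
  nlinarith [mul_nonneg (show (0:ℤ) ≤ (d:ℤ) - t - 1 by omega)
    (show (0:ℤ) ≤ (d₂:ℤ) - d₁ - 1 + t by omega)]

lemma arith3 (d d₁ d₂ : ℕ) (h1 : 1 ≤ d) (h2 : d < d₁) (h3 : d₁ < d₂) :
    (d₁ - d) * d₂ < (d₁ - d + 1) * (d₂ - 1) := by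
  have e3 : d ≤ d₁ := by omega
  have e4 : 1 ≤ d₂ := by omega
  zify [e3, e4]
  nlinarith [show (0:ℤ) ≤ (d₁:ℤ) - d by omega]

open scoped Classical in
/-- Weight of `∏ (X₀ - a) * (X₁ - b₀)`-type witnesses:
if `S ⊆ A 0` and `c : F → F` gives per-line nonzero counts... -/
lemma witness_weight (A : Fin 2 → Finset F) (S : Finset F) (hS : S ⊆ A 0)
    (g : MvPolynomial (Fin 2) F) (k : ℕ)
    (hzero : ∀ a ∈ S, ∀ b, eval ![a, b] g = 0)
    (hcount : ∀ a ∈ A 0 \ S, ((A 1).filter fun b => eval ![a, b] g ≠ 0).card = k) :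
    {x : Fin 2 → F | (∀ i, x i ∈ A i) ∧ eval x g ≠ 0}.ncard = ((A 0).card - S.card) * k := by
  classical
  rw [ncard_weight]
  rw [← Finset.sum_sdiff hS]
  have h1 : ∀ a ∈ S, ((A 1).filter fun b => eval ![a, b] g ≠ 0).card = 0 := by
    intro a ha
    rw [Finset.card_eq_zero, Finset.filter_eq_empty_iff]
    intro b _
    rw [not_ne_iff]
    exact hzero a ha b
  rw [Finset.sum_congr rfl h1, Finset.sum_congr rfl hcount, Finset.sum_const,
    Finset.sum_const, Finset.card_sdiff_of_subset hS, smul_eq_mul, smul_eq_mul]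
  omega

lemma eval_prod_X_sub_C (S : Finset F) (a b : F) :
    eval ![a, b] (∏ a' ∈ S, (X 0 - C a' : MvPolynomial (Fin 2) F)) = ∏ a' ∈ S, (a - a') := by
  rw [map_prod]
  exact Finset.prod_congr rfl fun a' _ => by simp

lemma totalDegree_prod_X_sub_C_le (S : Finset F) :
    (∏ a' ∈ S, (X 0 - C a' : MvPolynomial (Fin 2) F)).totalDegree ≤ S.card := by
  refine (totalDegree_finset_prod _ _).trans ?_
  calc ∑ a' ∈ S, (X 0 - C a' : MvPolynomial (Fin 2) F).totalDegree
      ≤ ∑ _a' ∈ S, 1 := Finset.sum_le_sum fun a' _ => by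
        refine (totalDegree_sub _ _).trans ?_
        simp [totalDegree_X]
    _ = S.card := by simp

open scoped Classical in
lemma witness_min (A : Fin 2 → Finset F) (d : ℕ) (hd : d ≤ (A 0).card) :
    ∃ f : MvPolynomial (Fin 2) F, f.totalDegree ≤ d ∧
      {x : Fin 2 → F | (∀ i, x i ∈ A i) ∧ eval x f ≠ 0}.ncard
        = ((A 0).card - d) * (A 1).card := by
  classical
  obtain ⟨S, hsub, hcard⟩ := Finset.exists_subset_card_eq hd
  refine ⟨∏ a' ∈ S, (X 0 - C a'), (totalDegree_prod_X_sub_C_le S).trans (by omega), ?_⟩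
  rw [witness_weight A S hsub _ ((A 1).card) ?_ ?_, hcard]
  · intro a ha b
    rw [eval_prod_X_sub_C]
    exact Finset.prod_eq_zero ha (by simp)
  · intro a ha
    rw [Finset.mem_sdiff] at ha
    have : ∀ b ∈ A 1, eval ![a, b] (∏ a' ∈ S, (X 0 - C a' : MvPolynomial (Fin 2) F)) ≠ 0 := by
      intro b _
      rw [eval_prod_X_sub_C]
      refine Finset.prod_ne_zero_iff.2 fun a' ha' => ?_
      rw [sub_ne_zero]
      rintro rfl
      exact ha.2 ha'
    rw [Finset.filter_true_of_mem this]

open scoped Classical in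
lemma witness_second (A : Fin 2 → Finset F) (d : ℕ) (hd : 1 ≤ d) (hdle : d - 1 ≤ (A 0).card)
    (hA1 : (A 1).Nonempty) :
    ∃ f : MvPolynomial (Fin 2) F, f.totalDegree ≤ d ∧
      {x : Fin 2 → F | (∀ i, x i ∈ A i) ∧ eval x f ≠ 0}.ncard
        = ((A 0).card - (d - 1)) * ((A 1).card - 1) := by
  classical
  obtain ⟨S, hsub, hcard⟩ := Finset.exists_subset_card_eq hdle
  obtain ⟨b₀, hb₀⟩ := hA1
  refine ⟨(∏ a' ∈ S, (X 0 - C a')) * (X 1 - C b₀), ?_, ?_⟩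
  · refine (totalDegree_mul _ _).trans ?_
    have h2 : (X 1 - C b₀ : MvPolynomial (Fin 2) F).totalDegree ≤ 1 := by
      refine (totalDegree_sub _ _).trans ?_
      simp [totalDegree_X]
    have := totalDegree_prod_X_sub_C_le S
    omega
  · have heval : ∀ a b : F, eval ![a, b] ((∏ a' ∈ S, (X 0 - C a' : MvPolynomial (Fin 2) F))
        * (X 1 - C b₀)) = (∏ a' ∈ S, (a - a')) * (b - b₀) := by
      intro a b
      rw [map_mul, eval_prod_X_sub_C]
      congr 1
      simp
    rw [witness_weight A S hsub _ ((A 1).card - 1) ?_ ?_, hcard]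
    · intro a ha b
      rw [heval]
      rw [Finset.prod_eq_zero ha (by simp), zero_mul]
    · intro a ha
      rw [Finset.mem_sdiff] at ha
      have hc : (∏ a' ∈ S, (a - a')) ≠ 0 := by
        refine Finset.prod_ne_zero_iff.2 fun a' ha' => ?_
        rw [sub_ne_zero]
        rintro rfl
        exact ha.2 ha'
      have : ((A 1).filter fun b => eval ![a, b] ((∏ a' ∈ S, (X 0 - C a' : MvPolynomial (Fin 2) F))
          * (X 1 - C b₀)) ≠ 0) = (A 1).erase b₀ := by
        ext b
        rw [Finset.mem_filter, Finset.mem_erase, heval]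
        simp only [ne_eq, mul_eq_zero, not_or, sub_eq_zero]
        tauto
      rw [this, Finset.card_erase_of_mem hb₀]


end Helpers

/-- Theorem 3 of the paper: for `X = A_1 × A_2` with `3 ≤ d_1 < d_2` and
`2 ≤ d < d_1`, the second Hamming weight of `C(d)` is `(d_1 - d + 1)(d_2 - 1)`. -/
theorem stmt14 (F : Type*) [Field F] [Fintype F]
    (A : Fin 2 → Finset F) (d₁ d₂ : ℕ)
    (hA1 : (A 0).card = d₁) (hA2 : (A 1).card = d₂)
    (h3 : 3 ≤ d₁) (h12 : d₁ < d₂)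
    (d : ℕ) (hd2 : 2 ≤ d) (hdd : d < d₁) :
    IsLeast {w | w ∈ codeWeights F 2 A d ∧ sInf (codeWeights F 2 A d) < w}
      ((d₁ - d + 1) * (d₂ - 1)) := by
  have hd2pos : 0 < d₂ := by omega
  -- lower bound facts for every codeword weight
  have hlow : ∀ w ∈ codeWeights F 2 A d,
      (d₁ - d) * d₂ ≤ w ∧ ((d₁ - d) * d₂ < w → (d₁ - d + 1) * (d₂ - 1) ≤ w) := by
    rintro w ⟨f, hdeg, hw, hw0⟩
    have hf : f ≠ 0 := by
      rintro rfl
      apply hw0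
      have hempty : {x : Fin 2 → F | (∀ i, x i ∈ A i) ∧ eval x (0 : MvPolynomial (Fin 2) F) ≠ 0}
          = ∅ := by
        ext x
        simp
      rw [hw, hempty, Set.ncard_empty]
    obtain ⟨t, ht, hlb, hexact⟩ := key_bound A d f hf hdeg
    rw [hA1, hA2] at hlb hexact
    rw [← hw] at hlb hexact
    clear hw hdeg hf f hw0
    constructor
    · exact le_trans (arith1 t d d₁ d₂ ht hdd h12) hlb
    · intro hlt
      rcases eq_or_lt_of_le ht with heq | htlt
      · have := hexact heq
        omega
      · have h1 : t + 1 ≤ d := htlt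
        exact le_trans (arith2 t d d₁ d₂ h1 hdd h12) hlb
  -- the minimum weight is attained
  have hMmem : (d₁ - d) * d₂ ∈ codeWeights F 2 A d := by
    have hdle : d ≤ (A 0).card := by omega
    have hpos : 0 < (d₁ - d) * d₂ := Nat.mul_pos (by omega) hd2pos
    obtain ⟨f, hdeg, hw⟩ := witness_min A d hdle
    rw [hA1, hA2] at hw
    exact ⟨f, hdeg, hw.symm, hpos.ne'⟩
  have hInf : sInf (codeWeights F 2 A d) = (d₁ - d) * d₂ := by
    refine le_antisymm (Nat.sInf_le hMmem) ?_
    exact (hlow _ (Nat.sInf_mem ⟨_, hMmem⟩)).1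
  -- the second weight is attained
  have hW2mem : (d₁ - d + 1) * (d₂ - 1) ∈ codeWeights F 2 A d := by
    have e1 : 1 ≤ d := by omega
    have e2 : d - 1 ≤ (A 0).card := by omega
    have e3 : 0 < (A 1).card := by omega
    have heq : (d₁ - (d - 1)) = d₁ - d + 1 := by omega
    have hpos : 0 < (d₁ - d + 1) * (d₂ - 1) := Nat.mul_pos (by omega) (by omega)
    obtain ⟨f, hdeg, hw⟩ := witness_second A d e1 e2 (Finset.card_pos.1 e3)
    rw [hA1, hA2, heq] at hw
    exact ⟨f, hdeg, hw.symm, hpos.ne'⟩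
  constructor
  · have e4 : 1 ≤ d := by omega
    exact ⟨hW2mem, by rw [hInf]; exact arith3 d d₁ d₂ e4 hdd h12⟩
  · rintro w ⟨hmem, hlt⟩
    rw [hInf] at hlt
    exact (hlow w hmem).2 hlt
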